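/- For all integers a, b ≥ 1, Σ_{r=0}^{a} C(a+b−r, b) 2^r + Σ_{r=0}^{b} C(a+b−r, a) 2^r = 2^{a+b+1}, where C(n,k) denotes the binomial coefficient. -/

import Mathlib

private def f (a b : ℕ) : ℕ := ∑ r ∈ Finset.range (a + 1), (a + b - r).choose b * 2 ^ r

private lemma geom (a : ℕ) : (∑ r ∈ Finset.range a, 2 ^ r) + 1 = 2 ^ a := by
  induction a with
  | zero => simp
  | succ n ih => rw [Finset.sum_range_succ, pow_succ]; omega

private lemma f_zero_right (a : ℕ) : f a 0 + 1 = 2 ^ (a + 1) := by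
  have : f a 0 = ∑ r ∈ Finset.range (a + 1), 2 ^ r := by
    simp [f]
  rw [this, geom]

private lemma f_zero_left (b : ℕ) : f 0 b = 1 := by simp [f]

private lemma f_pascal (a b : ℕ) : f (a + 1) (b + 1) = f a (b + 1) + f (a + 1) b := by
  have key : ∀ r ∈ Finset.range (a + 2),
      (a + 1 + (b + 1) - r).choose (b + 1) * 2 ^ r
        = (a + b + 1 - r).choose (b + 1) * 2 ^ r + (a + b + 1 - r).choose b * 2 ^ r := by
    intro r hr
    simp only [Finset.mem_range] at hr
    have h1 : a + 1 + (b + 1) - r = (a + b + 1 - r) + 1 := by omega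
    rw [h1, Nat.choose_succ_succ, add_mul, add_comm]
  have e1 : (∑ r ∈ Finset.range (a + 2), (a + b + 1 - r).choose (b + 1) * 2 ^ r)
      = f a (b + 1) := by
    rw [show a + 2 = (a + 1) + 1 from rfl, Finset.sum_range_succ]
    have h0 : a + b + 1 - (a + 1) = b := by omega
    rw [h0, Nat.choose_succ_self, zero_mul, add_zero]
    rfl
  have e2 : (∑ r ∈ Finset.range (a + 2), (a + b + 1 - r).choose b * 2 ^ r)
      = f (a + 1) b := by
    apply Finset.sum_congr rfl
    intro r hr
    congr 2
    omega
  calc f (a + 1) (b + 1)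
      = ∑ r ∈ Finset.range (a + 2), (a + 1 + (b + 1) - r).choose (b + 1) * 2 ^ r := rfl
    _ = ∑ r ∈ Finset.range (a + 2),
          ((a + b + 1 - r).choose (b + 1) * 2 ^ r + (a + b + 1 - r).choose b * 2 ^ r) :=
        Finset.sum_congr rfl key
    _ = f a (b + 1) + f (a + 1) b := by rw [Finset.sum_add_distrib, e1, e2]

private lemma main_lemma : ∀ n a b, a + b = n → f a b + f b a = 2 ^ (a + b + 1) := by
  intro n
  induction n with
  | zero =>
    intro a b h
    obtain ⟨rfl, rfl⟩ : a = 0 ∧ b = 0 := by omega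
    simp [f]
  | succ n ih =>
    intro a b h
    match a, b with
    | 0, b =>
      rw [f_zero_left]
      have := f_zero_right b
      have e : (0 : ℕ) + b + 1 = b + 1 := by omega
      rw [e]; omega
    | a + 1, 0 =>
      rw [f_zero_left]
      have := f_zero_right (a + 1)
      have e : a + 1 + 0 + 1 = a + 1 + 1 := by omega
      rw [e]; omega
    | a + 1, b + 1 =>
      rw [f_pascal a b, f_pascal b a]
      have h1 := ih a (b + 1) (by omega)
      have h2 := ih (a + 1) b (by omega)
      have e1 : a + (b + 1) + 1 = a + b + 2 := by omega
      have e2 : a + 1 + b + 1 = a + b + 2 := by omega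
      rw [e1] at h1; rw [e2] at h2
      have e3 : (a + 1) + (b + 1) + 1 = (a + b + 2) + 1 := by omega
      rw [e3, pow_succ]
      omega

/-- A binomial identity: for `a, b ≥ 1`,
`Σ_{r=0}^{a} C(a+b−r, b) 2^r + Σ_{r=0}^{b} C(a+b−r, a) 2^r = 2^{a+b+1}`. -/
theorem choose_sum_identity (a b : ℕ) (ha : 1 ≤ a) (hb : 1 ≤ b) :
    (∑ r ∈ Finset.range (a + 1), (a + b - r).choose b * 2 ^ r) +
      (∑ r ∈ Finset.range (b + 1), (a + b - r).choose a * 2 ^ r) = 2 ^ (a + b + 1) := by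
  have := main_lemma (a + b) a b rfl
  simpa [f, add_comm b a] using this
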